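/- arXiv:2012.01004 — 2 statements merged into one kernel-verified Lean document; each statement's English description precedes it below -/
import Mathlib

section
/- If the weight profile w is distinct (all weights pairwise different), then at every problem (P, q) there is at most one w-popular matching, and when one exists it equals the outcome of the serial dictatorship that processes the agents in strictly decreasing order of their weights. -/
open scoped Classical

section Defs

variable {I O : Type} [Fintype I] [Fintype O]

/-- A mechanism maps each problem (preference profile, capacity profile) to an assignment. -/
abbrev Mechanism (I O : Type) : Type :=
  (I → LinearOrder (Option O)) → (O → ℕ) → I → Option O

/-- `x` is strictly preferred to `y` under the strict preference (linear order) `p`,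
where `none` represents being unassigned (∅). -/
def Prefers (p : LinearOrder (Option O)) (x y : Option O) : Prop := p.lt y x

/-- A matching: each object `a` is assigned to at most `q a` agents. -/
def IsMatching (q : O → ℕ) (μ : I → Option O) : Prop :=
  ∀ a : O, (Finset.univ.filter fun i : I => μ i = some a).card ≤ q a

/-- Every object has capacity at least one. -/
def ValidCaps (q : O → ℕ) : Prop := ∀ a : O, 1 ≤ q a

/-- `μ` is more w-popular than `μ'`. -/
def MoreWPopular (w : I → ℝ) (P : I → LinearOrder (Option O)) (μ μ' : I → Option O) : Prop :=
  (∑ j ∈ Finset.univ.filter fun j : I => Prefers (P j) (μ' j) (μ j), w j)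
    < ∑ i ∈ Finset.univ.filter fun i : I => Prefers (P i) (μ i) (μ' i), w i

/-- `μ` is a w-popular matching for problem `(P, q)`. -/
def WPopular (w : I → ℝ) (P : I → LinearOrder (Option O)) (q : O → ℕ)
    (μ : I → Option O) : Prop :=
  IsMatching q μ ∧ ∀ μ', IsMatching q μ' → ¬ MoreWPopular w P μ' μ

/-- `μ` is more popular than `μ'` (unweighted, counting agents). -/
def MorePopular (P : I → LinearOrder (Option O)) (μ μ' : I → Option O) : Prop :=
  (Finset.univ.filter fun j : I => Prefers (P j) (μ' j) (μ j)).card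
    < (Finset.univ.filter fun i : I => Prefers (P i) (μ i) (μ' i)).card

/-- `μ` is a popular matching for problem `(P, q)`. -/
def Popular (P : I → LinearOrder (Option O)) (q : O → ℕ) (μ : I → Option O) : Prop :=
  IsMatching q μ ∧ ∀ μ', IsMatching q μ' → ¬ MorePopular P μ' μ

/-- `μ'` Pareto improves upon `μ`. -/
def ParetoImproves (P : I → LinearOrder (Option O)) (μ' μ : I → Option O) : Prop :=
  (∀ i : I, (P i).le (μ i) (μ' i)) ∧ ∃ j : I, Prefers (P j) (μ' j) (μ j)

/-- `μ` is non-wasteful: no agent prefers an object with unfilled capacity to her assignment. -/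
def NonWasteful (P : I → LinearOrder (Option O)) (q : O → ℕ) (μ : I → Option O) : Prop :=
  ∀ (i : I) (a : O), (Finset.univ.filter fun j : I => μ j = some a).card < q a →
    ¬ Prefers (P i) (some a) (μ i)

/-- The enumeration `e` lists the agents in weakly decreasing order of weight. -/
def DecreasingEnum (w : I → ℝ) (e : Fin (Fintype.card I) ≃ I) : Prop :=
  ∀ j k : Fin (Fintype.card I), j ≤ k → w (e k) ≤ w (e j)

/-- The weight profile is cumulatively ordered (w.r.t. the decreasing enumeration `e`):
each agent's weight is at least the sum of the weights of all later agents. -/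
def CumulativelyOrdered (w : I → ℝ) (e : Fin (Fintype.card I) ≃ I) : Prop :=
  ∀ j : Fin (Fintype.card I),
    (∑ k ∈ Finset.univ.filter fun k : Fin (Fintype.card I) => j < k, w (e k)) ≤ w (e j)

/-- All weights are pairwise different. -/
def DistinctWeights (w : I → ℝ) : Prop := Function.Injective w

/-- Essentially distinct (w.r.t. the decreasing enumeration `e`): all weights except possibly
the last two are pairwise different, the last two are equal, and the third-from-last weight is
at least the sum of the last two.  (Paper indices `i_1, …, i_n` correspond to `e 0, …, e (n-1)`.) -/
def EssentiallyDistinct (w : I → ℝ) (e : Fin (Fintype.card I) ≃ I) : Prop :=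
  (∀ j k : Fin (Fintype.card I), j < k → (k : ℕ) + 2 ≤ Fintype.card I → w (e j) ≠ w (e k)) ∧
  (∀ j k : Fin (Fintype.card I), (j : ℕ) + 2 = Fintype.card I → (k : ℕ) + 1 = Fintype.card I →
    w (e j) = w (e k)) ∧
  (∀ j k l : Fin (Fintype.card I), (j : ℕ) + 3 = Fintype.card I →
    (k : ℕ) + 2 = Fintype.card I → (l : ℕ) + 1 = Fintype.card I →
    w (e k) + w (e l) ≤ w (e j))

/-- The most preferred element (under `p`) of `{∅} ∪ {objects with remaining capacity}`. -/
noncomputable def sdChoice (p : LinearOrder (Option O)) (rem : O → ℕ) : Option O :=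
  @Finset.max' (Option O) p
    (insert none ((Finset.univ.filter fun a : O => 0 < rem a).image some))
    ⟨none, Finset.mem_insert_self _ _⟩

/-- State of the serial dictatorship after the first `k` agents (in the order `e`) have picked:
the partial assignment and the remaining capacities. -/
noncomputable def sdState (e : Fin (Fintype.card I) ≃ I)
    (P : I → LinearOrder (Option O)) (q : O → ℕ) : ℕ → (I → Option O) × (O → ℕ)
  | 0 => (fun _ => none, q)
  | k + 1 =>
    let prev := sdState e P q k
    if h : k < Fintype.card I then
      let i := e ⟨k, h⟩
      let c := sdChoice (P i) prev.2
      (Function.update prev.1 i c, fun a => if c = some a then prev.2 a - 1 else prev.2 a)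
    else prev

/-- The outcome of the serial dictatorship with agent ordering `e` at problem `(P, q)`:
agents pick, one by one in the order `e`, their most preferred acceptable object with
remaining capacity (and get ∅ if none remains). -/
noncomputable def SD (e : Fin (Fintype.card I) ≃ I)
    (P : I → LinearOrder (Option O)) (q : O → ℕ) : I → Option O :=
  (sdState e P q (Fintype.card I)).1

/-- An agent ordering is consistent with the weight profile `w` if agents with strictly larger
weight come strictly earlier. -/
def ConsistentOrder (w : I → ℝ) (e : Fin (Fintype.card I) ≃ I) : Prop :=
  ∀ i j : I, w j < w i → e.symm i < e.symm j

/-- A mechanism always produces a matching. -/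
def IsMechanism (ψ : Mechanism I O) : Prop :=
  ∀ P q, ValidCaps q → IsMatching q (ψ P q)

/-- Strategy-proofness: no agent can ever obtain a strictly preferred assignment
by misreporting. -/
def StrategyProof (ψ : Mechanism I O) : Prop :=
  ∀ P q, ValidCaps q → ∀ (i : I) (P'i : LinearOrder (Option O)),
    ¬ Prefers (P i) (ψ (Function.update P i P'i) q i) (ψ P q i)

/-- A mechanism is w-popular if its outcome is w-popular whenever a w-popular matching exists. -/
def WPopularMech (w : I → ℝ) (ψ : Mechanism I O) : Prop :=
  ∀ P q, ValidCaps q → (∃ μ, WPopular w P q μ) → WPopular w P q (ψ P q)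

/-- A mechanism is popular if its outcome is popular whenever a popular matching exists. -/
def PopularMech (ψ : Mechanism I O) : Prop :=
  ∀ P q, ValidCaps q → (∃ μ, Popular P q μ) → Popular P q (ψ P q)

/-- A mechanism is non-wasteful if its outcome is always non-wasteful. -/
def NonWastefulMech (ψ : Mechanism I O) : Prop :=
  ∀ P q, ValidCaps q → NonWasteful P q (ψ P q)

/-- `p` declares `a` as its only acceptable object (the class 𝒫ₐ). -/
def OnlyAcceptable (p : LinearOrder (Option O)) (a : O) : Prop :=
  p.lt none (some a) ∧ ∀ b : O, b ≠ a → p.lt (some b) none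

/-- `p` declares no object acceptable (the class 𝒫_∅). -/
def NothingAcceptable (p : LinearOrder (Option O)) : Prop :=
  ∀ b : O, p.lt (some b) none

/-- Preserving dispute resolutions. -/
def PreservesDisputeResolutions (ψ : Mechanism I O) : Prop :=
  ∀ P q, ValidCaps q → ∀ (i j : I) (a : O) (P'i : LinearOrder (Option O)),
    ψ P q j = some a → Prefers (P i) (some a) (ψ P q i) →
    OnlyAcceptable P'i a → ψ (Function.update P i P'i) q i = none →
    ∀ (P'' : I → LinearOrder (Option O)) (q' : O → ℕ), ValidCaps q' → q' a = 1 →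
      OnlyAcceptable (P'' i) a → OnlyAcceptable (P'' j) a →
      (∀ k : I, k ≠ i → k ≠ j → NothingAcceptable (P'' k)) →
      ψ P'' q' i = none ∧ ψ P'' q' j = some a

/-- `P'` is a (pure) Nash equilibrium of the preference-reporting game induced by `ψ`
at the problem `(P, q)` (true preferences `P`). -/
def NashEq (ψ : Mechanism I O) (P : I → LinearOrder (Option O)) (q : O → ℕ)
    (P' : I → LinearOrder (Option O)) : Prop :=
  ∀ (i : I) (P''i : LinearOrder (Option O)),
    ¬ Prefers (P i) (ψ (Function.update P' i P''i) q i) (ψ P' q i)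

/-- The mechanism admits a Nash equilibrium at every problem. -/
def AdmitsNash (ψ : Mechanism I O) : Prop :=
  ∀ P q, ValidCaps q → ∃ P', NashEq ψ P q P'

/-- w-popularity in equilibrium: every Nash-equilibrium outcome is w-popular
whenever a w-popular matching exists. -/
def WPopularInEquilibrium (w : I → ℝ) (ψ : Mechanism I O) : Prop :=
  ∀ P q, ValidCaps q → ∀ P', NashEq ψ P q P' →
    (∃ μ, WPopular w P q μ) → WPopular w P q (ψ P' q)

end Defs


section MyAux

variable {I O : Type} [Fintype I] [Fintype O]

lemma myLtOfLeNe (p : LinearOrder (Option O)) {a b : Option O} (h : p.le a b) (hne : a ≠ b) :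
    p.lt a b := by letI := p; exact lt_of_le_of_ne h hne

lemma myNotLtSelf (p : LinearOrder (Option O)) (a : Option O) : ¬ p.lt a a := by
  letI := p; exact lt_irrefl a

lemma myAsymm (p : LinearOrder (Option O)) {a b : Option O} (h : p.lt a b) : ¬ p.lt b a := by
  letI := p; exact h.asymm

lemma sdChoice_le_none (p : LinearOrder (Option O)) (rem : O → ℕ) :
    p.le none (sdChoice p rem) :=
  @Finset.le_max' _ p _ _ (Finset.mem_insert_self _ _)

lemma sdChoice_le_of_pos (p : LinearOrder (Option O)) (rem : O → ℕ) {a : O} (h : 0 < rem a) :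
    p.le (some a) (sdChoice p rem) :=
  @Finset.le_max' _ p _ _ (by simp [h])

lemma sdChoice_pos (p : LinearOrder (Option O)) (rem : O → ℕ) {a : O}
    (h : sdChoice p rem = some a) : 0 < rem a := by
  have hm : sdChoice p rem ∈
      insert none ((Finset.univ.filter fun b : O => 0 < rem b).image some) :=
    @Finset.max'_mem _ p _ _
  rw [h] at hm
  simp only [Finset.mem_insert, Finset.mem_image, Finset.mem_filter, Finset.mem_univ,
    true_and] at hm
  rcases hm with hm | ⟨b, hb, hba⟩
  · exact absurd hm (by simp)
  · have hba' : b = a := Option.some.inj hba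
    subst hba'
    exact hb

lemma sdState_none (e : Fin (Fintype.card I) ≃ I) (P : I → LinearOrder (Option O)) (q : O → ℕ) :
    ∀ (k : ℕ) (i : I), k ≤ (e.symm i : ℕ) → (sdState e P q k).1 i = none := by
  intro k
  induction k with
  | zero => intro i _; rfl
  | succ k ih =>
    intro i hk
    rw [sdState]
    by_cases h : k < Fintype.card I
    · rw [dif_pos h]
      have hne : i ≠ e ⟨k, h⟩ := by
        intro he
        have : (e.symm i : ℕ) = k := by rw [he]; simp
        omega
      simp only [Function.update_of_ne hne]
      exact ih i (by omega)
    · rw [dif_neg h]; exact ih i (by omega)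

lemma sdState_persist (e : Fin (Fintype.card I) ≃ I) (P : I → LinearOrder (Option O))
    (q : O → ℕ) {k : ℕ} (i : I) (hik : (e.symm i : ℕ) < k) :
    ∀ l, k ≤ l → (sdState e P q l).1 i = (sdState e P q k).1 i := by
  intro l hl
  induction l, hl using Nat.le_induction with
  | base => rfl
  | succ l hkl ih =>
    rw [sdState]
    by_cases h : l < Fintype.card I
    · rw [dif_pos h]
      have hne : i ≠ e ⟨l, h⟩ := by
        intro he
        have : (e.symm i : ℕ) = l := by rw [he]; simp
        omega
      simpa only [Function.update_of_ne hne] using ih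
    · rw [dif_neg h]; exact ih

lemma sdState_cap (e : Fin (Fintype.card I) ≃ I) (P : I → LinearOrder (Option O)) (q : O → ℕ) :
    ∀ (k : ℕ) (a : O),
      (Finset.univ.filter fun i : I => (sdState e P q k).1 i = some a).card
        + (sdState e P q k).2 a = q a := by
  intro k
  induction k with
  | zero => intro a; simp [sdState]
  | succ k ih =>
    intro a
    rw [sdState]
    by_cases h : k < Fintype.card I
    · rw [dif_pos h]
      dsimp only
      have hnone : (sdState e P q k).1 (e ⟨k, h⟩) = none :=
        sdState_none e P q k (e ⟨k, h⟩) (by simp)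
      by_cases hca : sdChoice (P (e ⟨k, h⟩)) (sdState e P q k).2 = some a
      · simp only [hca]
        have hfil : (Finset.univ.filter fun x : I =>
            Function.update (sdState e P q k).1 (e ⟨k, h⟩)
              (some a) x = some a)
            = insert (e ⟨k, h⟩)
                (Finset.univ.filter fun x : I => (sdState e P q k).1 x = some a) := by
          ext x
          by_cases hx : x = e ⟨k, h⟩
          · subst hx; simp [Function.update_self, hca]
          · simp [Function.update_of_ne hx, hx]
        have hnotmem : e ⟨k, h⟩ ∉
            (Finset.univ.filter fun x : I => (sdState e P q k).1 x = some a) := by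
          simp [hnone]
        have hpos : 0 < (sdState e P q k).2 a := sdChoice_pos _ _ hca
        rw [if_pos trivial, hfil, Finset.card_insert_of_notMem hnotmem]
        have := ih a
        omega
      · have hfil : (Finset.univ.filter fun x : I =>
            Function.update (sdState e P q k).1 (e ⟨k, h⟩)
              (sdChoice (P (e ⟨k, h⟩)) (sdState e P q k).2) x = some a)
            = Finset.univ.filter fun x : I => (sdState e P q k).1 x = some a := by
          ext x
          by_cases hx : x = e ⟨k, h⟩
          · subst hx; simp [Function.update_self, hca, hnone]
          · simp [Function.update_of_ne hx]
        rw [if_neg hca, hfil]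
        exact ih a
    · rw [dif_neg h]; exact ih a

lemma SD_eq (e : Fin (Fintype.card I) ≃ I) (P : I → LinearOrder (Option O)) (q : O → ℕ)
    (i : I) : SD e P q i = sdChoice (P i) (sdState e P q (e.symm i : ℕ)).2 := by
  have h : ((e.symm i : ℕ)) < Fintype.card I := (e.symm i).isLt
  have hei : e ⟨(e.symm i : ℕ), h⟩ = i := by
    have h2 : (⟨(e.symm i : ℕ), h⟩ : Fin (Fintype.card I)) = e.symm i := Fin.ext rfl
    rw [h2]; simp
  have h1 : (sdState e P q ((e.symm i : ℕ) + 1)).1 i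
      = sdChoice (P i) (sdState e P q (e.symm i : ℕ)).2 := by
    rw [sdState, dif_pos h]
    dsimp only
    rw [hei, Function.update_self]
  have h2 := sdState_persist e P q i (by omega : (e.symm i : ℕ) < (e.symm i : ℕ) + 1)
    (Fintype.card I) (by omega)
  rw [SD, h2, h1]

lemma sdState_eq_SD (e : Fin (Fintype.card I) ≃ I) (P : I → LinearOrder (Option O))
    (q : O → ℕ) {k : ℕ} (i : I) (hik : (e.symm i : ℕ) < k) :
    (sdState e P q k).1 i = SD e P q i := by
  have hlt : (e.symm i : ℕ) < (e.symm i : ℕ) + 1 := by omega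
  have h1 := sdState_persist e P q i hlt k hik
  have h2 := sdState_persist e P q i hlt (Fintype.card I) (by have := (e.symm i).isLt; omega)
  rw [SD, h2, h1]

lemma weight_lt (w : I → ℝ) (hd : DistinctWeights w) (e : Fin (Fintype.card I) ≃ I)
    (he : ConsistentOrder w e) {i j : I} (h : e.symm i < e.symm j) : w j < w i := by
  rcases lt_trichotomy (w i) (w j) with h1 | h1 | h1
  · exact absurd h (not_lt.2 (le_of_lt (he j i h1)))
  · exact absurd h (by rw [hd h1]; exact lt_irrefl _)
  · exact h1

lemma wpopular_eq_SD (w : I → ℝ) (hw : ∀ i, 0 < w i) (hd : DistinctWeights w)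
    (P : I → LinearOrder (Option O)) (q : O → ℕ)
    (e : Fin (Fintype.card I) ≃ I) (he : ConsistentOrder w e)
    (μ : I → Option O) (hμ : WPopular w P q μ) : μ = SD e P q := by
  obtain ⟨hmatch, hpop⟩ := hμ
  have key : ∀ (k : ℕ) (i : I), (e.symm i : ℕ) < k → μ i = SD e P q i := by
    intro k
    induction k with
    | zero => intro i hi; omega
    | succ k ih =>
      intro i hik
      rcases Nat.lt_or_ge (e.symm i : ℕ) k with hklt | hk
      · exact ih i hklt
      have hk' : (e.symm i : ℕ) = k := by omega
      have hkn : k < Fintype.card I := by have := (e.symm i).isLt; omega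
      have hSDi : SD e P q i = sdChoice (P i) (sdState e P q k).2 := by
        have := SD_eq e P q i; rwa [hk'] at this
      -- partial assignment facts
      have hTsub : ∀ b : O, (Finset.univ.filter fun x : I => (sdState e P q k).1 x = some b)
          ⊆ Finset.univ.filter fun x : I => μ x = some b := by
        intro b x hx
        simp only [Finset.mem_filter, Finset.mem_univ, true_and] at hx ⊢
        have hxlt : (e.symm x : ℕ) < k := by
          by_contra hge
          rw [sdState_none e P q k x (by omega)] at hx
          cases hx
        rw [ih x hxlt, ← sdState_eq_SD e P q x hxlt]
        exact hx
      have hinotT : ∀ b : O, i ∉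
          (Finset.univ.filter fun x : I => (sdState e P q k).1 x = some b) := by
        intro b hmem
        simp only [Finset.mem_filter, Finset.mem_univ, true_and] at hmem
        rw [sdState_none e P q k i (by omega)] at hmem
        cases hmem
      -- μ i is weakly below the SD choice
      have hle : (P i).le (μ i) (sdChoice (P i) (sdState e P q k).2) := by
        cases hμi : μ i with
        | none => exact sdChoice_le_none _ _
        | some b =>
          have hpos : 0 < (sdState e P q k).2 b := by
            by_contra hb
            have hzero : (sdState e P q k).2 b = 0 := by omega
            have hcap := sdState_cap e P q k b
            have hsub2 : insert i
                (Finset.univ.filter fun x : I => (sdState e P q k).1 x = some b)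
                ⊆ Finset.univ.filter fun x : I => μ x = some b := by
              intro x hx
              rcases Finset.mem_insert.1 hx with rfl | hx
              · simp [hμi]
              · exact hTsub b hx
            have hc1 := Finset.card_le_card hsub2
            rw [Finset.card_insert_of_notMem (hinotT b)] at hc1
            have := hmatch b
            omega
          exact sdChoice_le_of_pos _ _ hpos
      rw [hSDi]
      by_contra hne
      have hlt : (P i).lt (μ i) (sdChoice (P i) (sdState e P q k).2) :=
        myLtOfLeNe _ hle hne
      cases hcv : sdChoice (P i) (sdState e P q k).2 with
      | none =>
        rw [hcv] at hlt
        have hm' : IsMatching q (Function.update μ i none) := by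
          intro b
          refine le_trans (Finset.card_le_card ?_) (hmatch b)
          intro x hx
          simp only [Finset.mem_filter, Finset.mem_univ, true_and] at hx ⊢
          by_cases hxi : x = i
          · subst hxi; rw [Function.update_self] at hx; cases hx
          · rwa [Function.update_of_ne hxi] at hx
        refine absurd ?_ (hpop _ hm')
        have hlosers : (Finset.univ.filter fun j : I =>
            Prefers (P j) (μ j) (Function.update μ i none j)) = ∅ := by
          rw [Finset.filter_eq_empty_iff]
          intro j _
          by_cases hji : j = i
          · subst hji
            rw [Function.update_self]
            exact myAsymm (P j) hlt
          · rw [Function.update_of_ne hji]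
            exact myNotLtSelf (P j) _
        have hwin : i ∈ Finset.univ.filter fun x : I =>
            Prefers (P x) (Function.update μ i none x) (μ x) := by
          simp only [Finset.mem_filter, Finset.mem_univ, true_and]
          show (P i).lt (μ i) (Function.update μ i none i)
          rw [Function.update_self]; exact hlt
        rw [MoreWPopular, hlosers, Finset.sum_empty]
        exact Finset.sum_pos (fun x _ => hw x) ⟨i, hwin⟩
      | some a =>
        rw [hcv] at hlt
        by_cases hfull : (Finset.univ.filter fun x : I => μ x = some a).card < q a
        · -- room at a: move i to a
          have hm' : IsMatching q (Function.update μ i (some a)) := by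
            intro b
            by_cases hba : b = a
            · subst hba
              have hsub : (Finset.univ.filter fun x : I =>
                  Function.update μ i (some b) x = some b)
                  ⊆ insert i (Finset.univ.filter fun x : I => μ x = some b) := by
                intro x hx
                simp only [Finset.mem_filter, Finset.mem_univ, true_and] at hx
                by_cases hxi : x = i
                · subst hxi; exact Finset.mem_insert_self _ _
                · refine Finset.mem_insert_of_mem ?_
                  simp only [Finset.mem_filter, Finset.mem_univ, true_and]
                  rwa [Function.update_of_ne hxi] at hx
              have h1 := Finset.card_le_card hsub
              have h2 := Finset.card_insert_le i
                (Finset.univ.filter fun x : I => μ x = some b)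
              omega
            · refine le_trans (Finset.card_le_card ?_) (hmatch b)
              intro x hx
              simp only [Finset.mem_filter, Finset.mem_univ, true_and] at hx ⊢
              by_cases hxi : x = i
              · subst hxi; rw [Function.update_self] at hx
                exact absurd (Option.some.inj hx) (fun h2 => hba h2.symm)
              · rwa [Function.update_of_ne hxi] at hx
          refine absurd ?_ (hpop _ hm')
          have hlosers : (Finset.univ.filter fun j : I =>
              Prefers (P j) (μ j) (Function.update μ i (some a) j)) = ∅ := by
            rw [Finset.filter_eq_empty_iff]
            intro j _
            by_cases hji : j = i
            · subst hji
              rw [Function.update_self]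
              exact myAsymm (P j) hlt
            · rw [Function.update_of_ne hji]
              exact myNotLtSelf (P j) _
          have hwin : i ∈ Finset.univ.filter fun x : I =>
              Prefers (P x) (Function.update μ i (some a) x) (μ x) := by
            simp only [Finset.mem_filter, Finset.mem_univ, true_and]
            show (P i).lt (μ i) (Function.update μ i (some a) i)
            rw [Function.update_self]; exact hlt
          rw [MoreWPopular, hlosers, Finset.sum_empty]
          exact Finset.sum_pos (fun x _ => hw x) ⟨i, hwin⟩
        · -- a is full under μ: displace a later agent
          have hcnt : (Finset.univ.filter fun x : I => μ x = some a).card = q a :=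
            le_antisymm (hmatch a) (not_lt.1 hfull)
          have hpos : 0 < (sdState e P q k).2 a := sdChoice_pos _ _ hcv
          have hcap := sdState_cap e P q k a
          obtain ⟨j0, hj0mem, hj0T⟩ : ∃ j0 ∈ Finset.univ.filter fun x : I => μ x = some a,
              j0 ∉ Finset.univ.filter fun x : I => (sdState e P q k).1 x = some a := by
            by_contra hno
            push_neg at hno
            have := Finset.card_le_card (fun x hx => hno x hx)
            omega
          have hμj0 : μ j0 = some a := by
            simpa only [Finset.mem_filter, Finset.mem_univ, true_and] using hj0mem
          have hj0k : k < (e.symm j0 : ℕ) := by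
            rcases Nat.lt_trichotomy (e.symm j0 : ℕ) k with hlt' | heq | hgt
            · exfalso
              apply hj0T
              simp only [Finset.mem_filter, Finset.mem_univ, true_and]
              rw [sdState_eq_SD e P q j0 hlt', ← ih j0 hlt']
              exact hμj0
            · exfalso
              have hji : j0 = i := by
                have : e.symm j0 = e.symm i := Fin.ext (by omega)
                exact e.symm.injective this
              rw [hji] at hμj0
              exact hne (by rw [hcv]; exact hμj0)
            · exact hgt
          have hj0ne : j0 ≠ i := by
            intro hji; rw [hji] at hj0k; omega
          have hwlt : w j0 < w i := by
            refine weight_lt w hd e he ?_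
            rw [Fin.lt_def]; omega
          have hμ'i : Function.update (Function.update μ j0 none) i (some a) i = some a :=
            Function.update_self _ _ _
          have hμ'j0 : Function.update (Function.update μ j0 none) i (some a) j0 = none := by
            rw [Function.update_of_ne hj0ne, Function.update_self]
          have hμ'x : ∀ x, x ≠ i → x ≠ j0 →
              Function.update (Function.update μ j0 none) i (some a) x = μ x := by
            intro x hxi hxj
            rw [Function.update_of_ne hxi, Function.update_of_ne hxj]
          have hm' : IsMatching q (Function.update (Function.update μ j0 none) i (some a)) := by
            intro b
            by_cases hba : b = a
            · subst hba
              have hsub : (Finset.univ.filter fun x : I =>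
                  Function.update (Function.update μ j0 none) i (some b) x = some b)
                  ⊆ insert i ((Finset.univ.filter fun x : I => μ x = some b).erase j0) := by
                intro x hx
                simp only [Finset.mem_filter, Finset.mem_univ, true_and] at hx
                by_cases hxi : x = i
                · subst hxi; exact Finset.mem_insert_self _ _
                · refine Finset.mem_insert_of_mem ?_
                  by_cases hxj : x = j0
                  · subst hxj; rw [hμ'j0] at hx; cases hx
                  · refine Finset.mem_erase.2 ⟨hxj, ?_⟩
                    simp only [Finset.mem_filter, Finset.mem_univ, true_and]
                    rwa [hμ'x x hxi hxj] at hx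
              have h1 := Finset.card_le_card hsub
              have h2 : ((Finset.univ.filter fun x : I => μ x = some b).erase j0).card
                  = q b - 1 := by
                rw [Finset.card_erase_of_mem hj0mem, hcnt]
              have h3 := Finset.card_insert_le i
                ((Finset.univ.filter fun x : I => μ x = some b).erase j0)
              have hq1 : 1 ≤ q b := le_trans hpos (by omega)
              omega
            · refine le_trans (Finset.card_le_card ?_) (hmatch b)
              intro x hx
              simp only [Finset.mem_filter, Finset.mem_univ, true_and] at hx ⊢
              by_cases hxi : x = i
              · subst hxi; rw [hμ'i] at hx
                exact absurd (Option.some.inj hx) (fun h2 => hba h2.symm)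
              · by_cases hxj : x = j0
                · subst hxj; rw [hμ'j0] at hx; cases hx
                · rwa [hμ'x x hxi hxj] at hx
          refine absurd ?_ (hpop _ hm')
          have hlos : (Finset.univ.filter fun jj : I =>
              Prefers (P jj) (μ jj)
                (Function.update (Function.update μ j0 none) i (some a) jj)) ⊆ {j0} := by
            intro x hx
            simp only [Finset.mem_filter, Finset.mem_univ, true_and] at hx; simp only [Prefers] at hx
            by_cases hxi : x = i
            · exfalso
              subst hxi
              rw [hμ'i] at hx
              exact myAsymm (P x) hlt hx
            · by_cases hxj : x = j0
              · simp [hxj]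
              · exfalso
                rw [hμ'x x hxi hxj] at hx
                exact myNotLtSelf (P x) _ hx
          have hwini : i ∈ Finset.univ.filter fun x : I =>
              Prefers (P x) (Function.update (Function.update μ j0 none) i (some a) x)
                (μ x) := by
            simp only [Finset.mem_filter, Finset.mem_univ, true_and]; simp only [Prefers]
            rw [hμ'i]; exact hlt
          rw [MoreWPopular]
          have h1 : (∑ jj ∈ Finset.univ.filter fun jj : I =>
              Prefers (P jj) (μ jj)
                (Function.update (Function.update μ j0 none) i (some a) jj), w jj)
              ≤ w j0 := by
            refine le_trans (Finset.sum_le_sum_of_subset_of_nonneg hlos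
              (fun x _ _ => (hw x).le)) ?_
            rw [Finset.sum_singleton]
          have h2 : w i ≤ ∑ x ∈ Finset.univ.filter fun x : I =>
              Prefers (P x) (Function.update (Function.update μ j0 none) i (some a) x)
                (μ x), w x := by
            have := Finset.sum_le_sum_of_subset_of_nonneg
              (Finset.singleton_subset_iff.2 hwini) (fun x _ _ => (hw x).le)
            simpa using this
          linarith
  funext i
  exact key (Fintype.card I) i (e.symm i).isLt

end MyAux

/-- With distinct weights, at every problem there is at most one w-popular
matching, and when it exists it is the outcome of the serial dictatorship processing agents
in strictly decreasing order of their weights. -/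
theorem stmt11 {I O : Type} [Fintype I] [Fintype O]
    (hI : 3 ≤ Fintype.card I) (hIO : Fintype.card I ≤ Fintype.card O)
    (w : I → ℝ) (hw : ∀ i, 0 < w i) (hd : DistinctWeights w)
    (P : I → LinearOrder (Option O)) (q : O → ℕ) (hq : ValidCaps q) :
    (∀ μ μ' : I → Option O, WPopular w P q μ → WPopular w P q μ' → μ = μ') ∧
    (∀ e' : Fin (Fintype.card I) ≃ I, ConsistentOrder w e' →
      ∀ μ : I → Option O, WPopular w P q μ → μ = SD e' P q) := by
  obtain ⟨e, he⟩ : ∃ e : Fin (Fintype.card I) ≃ I, ConsistentOrder w e := by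
    letI L : LinearOrder I := LinearOrder.lift' (fun i => -w i)
      (fun i j h => hd (by simpa using congrArg Neg.neg h))
    refine ⟨(monoEquivOfFin I rfl).toEquiv, fun i j h => ?_⟩
    exact (OrderIso.symm (monoEquivOfFin I rfl)).strictMono
      (show L.lt i j from (show -w i < -w j by linarith))
  constructor
  · intro μ μ' h1 h2
    rw [wpopular_eq_SD w hw hd P q e he μ h1, wpopular_eq_SD w hw hd P q e he μ' h2]
  · intro e' he' μ hμ
    exact wpopular_eq_SD w hw hd P q e' he' μ hμ
end

section
/- No mechanism is both popular and strategy-proof. -/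
open scoped Classical

section Aux

set_option linter.unusedSectionVars false

open Finset

variable {I O : Type} [Fintype I] [Fintype O]

/-- Build a linear order on `Option O` from a rank function (higher rank = better). -/
noncomputable def mkPref (r : Option O → ℕ) : LinearOrder (Option O) :=
  LinearOrder.lift'
    (fun x => r x * Fintype.card (Option O) + ((Fintype.equivFin (Option O)) x : ℕ))
    (by
      have key : ∀ u v : Option O, r u < r v →
          r u * Fintype.card (Option O) + ((Fintype.equivFin (Option O)) u : ℕ) <
          r v * Fintype.card (Option O) + ((Fintype.equivFin (Option O)) v : ℕ) := by
        intro u v huv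
        have h1 := ((Fintype.equivFin (Option O)) u).isLt
        have h2 : (r u + 1) * Fintype.card (Option O) ≤ r v * Fintype.card (Option O) :=
          Nat.mul_le_mul_right _ huv
        nlinarith [((Fintype.equivFin (Option O)) v).isLt]
      intro x y hxy
      have hr : r x = r y := by
        rcases lt_trichotomy (r x) (r y) with h | h | h
        · exact absurd hxy (Nat.ne_of_lt (key _ _ h))
        · exact h
        · exact absurd hxy.symm (Nat.ne_of_lt (key _ _ h))
      have he : ((Fintype.equivFin (Option O)) x : ℕ) = ((Fintype.equivFin (Option O)) y : ℕ) := by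
        dsimp only at hxy
        rw [hr] at hxy
        exact Nat.add_left_cancel hxy
      exact (Fintype.equivFin (Option O)).injective (Fin.ext he))

lemma mkPref_lt {r : Option O → ℕ} {x y : Option O} (h : r x < r y) : (mkPref r).lt x y := by
  show r x * Fintype.card (Option O) + ((Fintype.equivFin (Option O)) x : ℕ) <
       r y * Fintype.card (Option O) + ((Fintype.equivFin (Option O)) y : ℕ)
  have h1 := ((Fintype.equivFin (Option O)) x).isLt
  have h2 : (r x + 1) * Fintype.card (Option O) ≤ r y * Fintype.card (Option O) :=
    Nat.mul_le_mul_right _ h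
  nlinarith [((Fintype.equivFin (Option O)) y).isLt]

lemma plt_irrefl (p : LinearOrder (Option O)) (x : Option O) : ¬ p.lt x x := by
  letI := p; exact lt_irrefl x

lemma plt_asymm (p : LinearOrder (Option O)) {x y : Option O} (h : p.lt x y) : ¬ p.lt y x := by
  letI := p; exact fun h' => lt_asymm h h'

/-- rank function for the preference α > β > ∅ > everything else -/
noncomputable def rk2 (α β : O) : Option O → ℕ := fun x =>
  if x = some α then 3 else if x = some β then 2 else if x = none then 1 else 0

/-- rank function for the preference with nothing acceptable -/
noncomputable def rk0 : Option O → ℕ := fun x => if x = none then 1 else 0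

/-- the preference α > β > ∅ > everything else -/
noncomputable def p2 (α β : O) : LinearOrder (Option O) := mkPref (rk2 α β)

/-- the preference with nothing acceptable -/
noncomputable def p0 : LinearOrder (Option O) := mkPref (rk0 (O := O))

lemma rk2_a (α β : O) : rk2 α β (some α) = 3 := by simp [rk2]

lemma rk2_b (α β : O) (h : α ≠ β) : rk2 α β (some β) = 2 := by
  simp [rk2, Option.some.injEq, Ne.symm h]

lemma rk2_none (α β : O) : rk2 α β none = 1 := by simp [rk2]

lemma rk2_other (α β : O) {γ : O} (h1 : γ ≠ α) (h2 : γ ≠ β) : rk2 α β (some γ) = 0 := by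
  simp [rk2, Option.some.injEq, h1, h2]

lemma rk0_none : (rk0 : Option O → ℕ) none = 1 := by simp [rk0]

lemma rk0_some (γ : O) : (rk0 : Option O → ℕ) (some γ) = 0 := by simp [rk0]

lemma p2_top (α β : O) (z : Option O) (hz : z ≠ some α) : (p2 α β).lt z (some α) := by
  apply mkPref_lt
  rw [rk2_a]
  rcases z with _ | γ
  · rw [rk2_none]; omega
  · have hγ : γ ≠ α := by simpa using hz
    by_cases hβ : γ = β
    · subst hβ
      rw [rk2_b α γ (Ne.symm hγ)]; omega
    · rw [rk2_other α β hγ hβ]; omega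

lemma p2_lt_ba (α β : O) (hαβ : α ≠ β) : (p2 α β).lt (some β) (some α) := by
  apply mkPref_lt
  rw [rk2_a, rk2_b α β hαβ]
  omega

lemma p2_second (α β : O) (hαβ : α ≠ β) (z : Option O)
    (h1 : z ≠ some α) (h2 : z ≠ some β) : (p2 α β).lt z (some β) := by
  apply mkPref_lt
  rw [rk2_b α β hαβ]
  rcases z with _ | γ
  · rw [rk2_none]; omega
  · rw [rk2_other α β (by simpa using h1) (by simpa using h2)]; omega

lemma p2_unacc (α β : O) {γ : O} (h1 : γ ≠ α) (h2 : γ ≠ β) : (p2 α β).lt (some γ) none := by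
  apply mkPref_lt
  rw [rk2_none, rk2_other α β h1 h2]
  omega

lemma p2_acc (α β : O) {z : Option O} (h : (p2 α β).lt none z) :
    z = some α ∨ z = some β := by
  rcases z with _ | γ
  · exact absurd h (plt_irrefl _ _)
  · by_cases h1 : γ = α
    · exact Or.inl (by rw [h1])
    · by_cases h2 : γ = β
      · exact Or.inr (by rw [h2])
      · exact absurd h (plt_asymm _ (p2_unacc α β h1 h2))

lemma p0_unacc (γ : O) : (p0 : LinearOrder (Option O)).lt (some γ) none := by
  apply mkPref_lt
  rw [rk0_none, rk0_some]
  omega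

lemma p0_top (z : Option O) (hz : z ≠ none) : (p0 : LinearOrder (Option O)).lt z none := by
  rcases z with _ | γ
  · exact absurd rfl hz
  · exact p0_unacc γ

/-- the all-ones capacity profile -/
def q1 : O → ℕ := fun _ => 1

lemma validCaps_q1 : ValidCaps (q1 (O := O)) := fun _ => le_refl 1

lemma matching_inj {μ : I → Option O} (h : IsMatching (q1 (O := O)) μ) {v w : I} {o : O}
    (hv : μ v = some o) (hw : μ w = some o) : v = w := by
  by_contra hne
  have hsub : ({v, w} : Finset I) ⊆ Finset.univ.filter fun i => μ i = some o := by
    intro x hx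
    simp only [Finset.mem_insert, Finset.mem_singleton] at hx
    rcases hx with rfl | rfl <;> simp [Finset.mem_filter, hv, hw]
  have hcard := Finset.card_le_card hsub
  rw [Finset.card_pair hne] at hcard
  have h1 := h o
  simp only [q1] at h1
  omega

lemma isMatching_of_inj {μ : I → Option O}
    (h : ∀ v w o, μ v = some o → μ w = some o → v = w) : IsMatching (q1 (O := O)) μ := by
  intro o
  show _ ≤ 1
  apply Finset.card_le_one.mpr
  intro x hx y hy
  simp only [Finset.mem_filter] at hx hy
  exact h x y o hx.2 hy.2

lemma beats10 (P : I → LinearOrder (Option O)) (ν μ : I → Option O) (t : I)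
    (h1 : Prefers (P t) (ν t) (μ t)) (hw : ∀ v, ¬ Prefers (P v) (μ v) (ν v)) :
    MorePopular P ν μ := by
  unfold MorePopular
  have hW : (Finset.univ.filter fun j : I => Prefers (P j) (μ j) (ν j)) = ∅ :=
    Finset.filter_eq_empty_iff.mpr fun v _ => hw v
  rw [hW]
  simp only [Finset.card_empty]
  exact Finset.card_pos.mpr ⟨t, by simp [Finset.mem_filter, h1]⟩

lemma beats21 (P : I → LinearOrder (Option O)) (ν μ : I → Option O) (t₁ t₂ w₀ : I)
    (h12 : t₁ ≠ t₂)
    (h1 : Prefers (P t₁) (ν t₁) (μ t₁)) (h2 : Prefers (P t₂) (ν t₂) (μ t₂))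
    (hw : ∀ v, v ≠ w₀ → ¬ Prefers (P v) (μ v) (ν v)) : MorePopular P ν μ := by
  unfold MorePopular
  have hWsub : (Finset.univ.filter fun j : I => Prefers (P j) (μ j) (ν j)) ⊆ {w₀} := by
    intro v hv
    simp only [Finset.mem_filter, Finset.mem_univ, true_and] at hv
    simp only [Finset.mem_singleton]
    by_contra hne
    exact hw v hne hv
  have hW : (Finset.univ.filter fun j : I => Prefers (P j) (μ j) (ν j)).card ≤ 1 := by
    simpa using Finset.card_le_card hWsub
  have hIsub : ({t₁, t₂} : Finset I) ⊆
      Finset.univ.filter fun i : I => Prefers (P i) (ν i) (μ i) := by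
    intro x hx
    simp only [Finset.mem_insert, Finset.mem_singleton] at hx
    rcases hx with rfl | rfl <;> simp [Finset.mem_filter, h1, h2]
  have hI : 2 ≤ (Finset.univ.filter fun i : I => Prefers (P i) (ν i) (μ i)).card := by
    have := Finset.card_le_card hIsub
    rwa [Finset.card_pair h12] at this
  omega

lemma pop_nofree {P : I → LinearOrder (Option O)} {μ : I → Option O}
    (hpop : Popular P (q1 (O := O)) μ) (t : I) (o : O)
    (hfree : ∀ v, μ v ≠ some o) (hwant : (P t).lt (μ t) (some o)) : False := by
  classical
  set ν := Function.update μ t (some o) with hν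
  have hm : IsMatching (q1 (O := O)) ν := by
    apply isMatching_of_inj
    intro v w o' hv hw
    by_cases hvt : v = t <;> by_cases hwt : w = t
    · rw [hvt, hwt]
    · exfalso
      rw [hν, hvt, Function.update_self] at hv
      rw [hν, Function.update_of_ne hwt] at hw
      rw [← hv] at hw
      exact hfree w hw
    · exfalso
      rw [hν, hwt, Function.update_self] at hw
      rw [hν, Function.update_of_ne hvt] at hv
      rw [← hw] at hv
      exact hfree v hv
    · rw [hν, Function.update_of_ne hvt] at hv
      rw [hν, Function.update_of_ne hwt] at hw
      exact matching_inj hpop.1 hv hw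
  apply hpop.2 ν hm
  apply beats10 P ν μ t
  · show (P t).lt (μ t) (ν t)
    rw [hν, Function.update_self]
    exact hwant
  · intro v
    show ¬ (P v).lt (ν v) (μ v)
    by_cases hvt : v = t
    · rw [hν, hvt, Function.update_self]
      exact plt_asymm _ hwant
    · rw [hν, Function.update_of_ne hvt]
      exact plt_irrefl _ _

lemma not_lt_top (p : LinearOrder (Option O)) (w : Option O)
    (htop : ∀ z, z ≠ w → p.lt z w) (z : Option O) : ¬ p.lt w z := by
  by_cases hz : z = w
  · rw [hz]; exact plt_irrefl p w
  · exact plt_asymm p (htop z hz)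

/-- the matching assigning α to s, β to u, nothing elsewhere -/
noncomputable def xM (s u : I) (α β : O) : I → Option O := fun v =>
  if v = s then some α else if v = u then some β else none

lemma xM_matching {s u : I} {α β : O} (hsu : s ≠ u) (hαβ : α ≠ β) :
    IsMatching (q1 (O := O)) (xM s u α β) := by
  apply isMatching_of_inj
  intro v w o hv hw
  unfold xM at hv hw
  split_ifs at hv hw <;> simp_all

lemma xM_popular (P : I → LinearOrder (Option O)) (s u f : I) (α β : O)
    (hsu : s ≠ u) (hsf : s ≠ f) (huf : u ≠ f) (hαβ : α ≠ β)
    (htops : ∀ z, z ≠ some α → (P s).lt z (some α))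
    (htopu : ∀ z, z ≠ some β → (P u).lt z (some β))
    (hext : ∀ v, v ≠ s → v ≠ u → v ≠ f → ∀ z, z ≠ none → (P v).lt z none)
    (haccf : ∀ z, (P f).lt none z → z = some α ∨ z = some β) :
    Popular P (q1 (O := O)) (xM s u α β) := by
  constructor
  · exact xM_matching hsu hαβ
  · intro ν hν hmp
    unfold MorePopular at hmp
    have hxs : xM s u α β s = some α := by simp [xM]
    have hxu : xM s u α β u = some β := by simp [xM, Ne.symm hsu]
    have hxf : xM s u α β f = none := by simp [xM, Ne.symm hsf, Ne.symm huf]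
    have hsub : (Finset.univ.filter fun i : I => Prefers (P i) (ν i) (xM s u α β i)) ⊆ {f} := by
      intro v hv
      simp only [Finset.mem_filter, Finset.mem_univ, true_and] at hv
      simp only [Finset.mem_singleton]
      by_contra hvf
      by_cases hvs : v = s
      · rw [hvs] at hv
        rw [hxs] at hv
        exact not_lt_top (P s) (some α) htops (ν s) hv
      · by_cases hvu : v = u
        · rw [hvu] at hv
          rw [hxu] at hv
          exact not_lt_top (P u) (some β) htopu (ν u) hv
        · have hXv : xM s u α β v = none := by simp [xM, hvs, hvu]
          rw [hXv] at hv
          exact not_lt_top (P v) none (hext v hvs hvu hvf) (ν v) hv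
    have hle : (Finset.univ.filter fun i : I => Prefers (P i) (ν i) (xM s u α β i)).card ≤ 1 := by
      simpa using Finset.card_le_card hsub
    have hfmem : f ∈ Finset.univ.filter fun i : I => Prefers (P i) (ν i) (xM s u α β i) := by
      have hpos : 0 < (Finset.univ.filter fun i : I =>
          Prefers (P i) (ν i) (xM s u α β i)).card := by omega
      obtain ⟨v, hv⟩ := Finset.card_pos.mp hpos
      have hvf := hsub hv
      simp only [Finset.mem_singleton] at hvf
      rwa [hvf] at hv
    have himp : (P f).lt (xM s u α β f) (ν f) := (Finset.mem_filter.mp hfmem).2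
    rw [hxf] at himp
    have hWzero : (Finset.univ.filter fun j : I =>
        Prefers (P j) (xM s u α β j) (ν j)).card = 0 := by omega
    have hWempty := Finset.card_eq_zero.mp hWzero
    rcases haccf (ν f) himp with h | h
    · have hνs : ν s ≠ some α := fun hh => hsf (matching_inj hν hh h)
      have hmem : s ∈ Finset.univ.filter fun j : I => Prefers (P j) (xM s u α β j) (ν j) := by
        simp only [Finset.mem_filter, Finset.mem_univ, true_and]
        show (P s).lt (ν s) (xM s u α β s)
        rw [hxs]
        exact htops _ hνs
      rw [hWempty] at hmem
      exact absurd hmem (Finset.notMem_empty s)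
    · have hνu : ν u ≠ some β := fun hh => huf (matching_inj hν hh h)
      have hmem : u ∈ Finset.univ.filter fun j : I => Prefers (P j) (xM s u α β j) (ν j) := by
        simp only [Finset.mem_filter, Finset.mem_univ, true_and]
        show (P u).lt (ν u) (xM s u α β u)
        rw [hxu]
        exact htopu _ hνu
      rw [hWempty] at hmem
      exact absurd hmem (Finset.notMem_empty u)

/-- At a profile where s, t report α>β>∅, u reports β>α>∅ and everyone else finds
nothing acceptable, every popular matching assigns β to u. -/
lemma charW (P : I → LinearOrder (Option O)) (s t u : I) (α β : O)
    (hst : s ≠ t) (hsu : s ≠ u) (htu : t ≠ u) (hαβ : α ≠ β)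
    (hPs : P s = p2 α β) (hPt : P t = p2 α β) (hPu : P u = p2 β α)
    (hext : ∀ v, v ≠ s → v ≠ t → v ≠ u → P v = p0)
    {μ : I → Option O} (hpop : Popular P (q1 (O := O)) μ) : μ u = some β := by
  by_contra hub
  have hutop : (P u).lt (μ u) (some β) := by
    rw [hPu]; exact p2_top β α (μ u) hub
  by_cases hβfree : ∀ v, μ v ≠ some β
  · exact pop_nofree hpop u β hβfree hutop
  · push_neg at hβfree
    obtain ⟨w, hwβ⟩ := hβfree
    have hwst : w = s ∨ w = t := by
      by_contra hcon
      push_neg at hcon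
      by_cases hwu : w = u
      · rw [hwu] at hwβ; exact hub hwβ
      · have hPw := hext w hcon.1 hcon.2 hwu
        have := plt_asymm (P w) (by rw [hPw]; exact p0_unacc β)
        -- μ w = some β is unacceptable; but that in itself is no contradiction:
        -- direct argument: challenger updating w to none beats μ.
        -- Use beats10 with challenger update μ w none.
        classical
        set ν := Function.update μ w none with hν
        have hm : IsMatching (q1 (O := O)) ν := by
          apply isMatching_of_inj
          intro x y o hx hy
          by_cases hxw : x = w <;> by_cases hyw : y = w
          · rw [hxw, hyw]
          · exfalso; rw [hν, hxw, Function.update_self] at hx; exact Option.noConfusion rfl (heq_of_eq hx)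
          · exfalso; rw [hν, hyw, Function.update_self] at hy; exact Option.noConfusion rfl (heq_of_eq hy)
          · rw [hν, Function.update_of_ne hxw] at hx
            rw [hν, Function.update_of_ne hyw] at hy
            exact matching_inj hpop.1 hx hy
        apply hpop.2 ν hm
        apply beats10 P ν μ w
        · show (P w).lt (μ w) (ν w)
          rw [hν, Function.update_self, hwβ, hPw]
          exact p0_unacc β
        · intro v
          show ¬ (P v).lt (ν v) (μ v)
          by_cases hvw : v = w
          · rw [hν, hvw, Function.update_self, hwβ]
            exact plt_asymm _ (by rw [hPw]; exact p0_unacc β)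
          · rw [hν, Function.update_of_ne hvw]
            exact plt_irrefl _ _
    -- challenger: xM h u α β where h ∈ {s,t} is the holder of β
    rcases hwst with rfl | rfl
    · -- μ w = μ s = some β ; challenger xM s u α β
      apply hpop.2 (xM w u α β) (xM_matching hsu hαβ)
      apply beats21 P (xM w u α β) μ w u t hsu
      · show (P w).lt (μ w) (xM w u α β w)
        rw [hwβ, hPs]
        have : xM w u α β w = some α := by simp [xM]
        rw [this]
        exact p2_lt_ba α β hαβ
      · show (P u).lt (μ u) (xM w u α β u)
        have : xM w u α β u = some β := by simp [xM, Ne.symm hsu]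
        rw [this]
        exact hutop
      · intro v hvt
        show ¬ (P v).lt (xM w u α β v) (μ v)
        by_cases hvs : v = w
        · rw [hvs]
          have : xM w u α β w = some α := by simp [xM]
          rw [this, hwβ]
          exact plt_asymm _ (by rw [hPs]; exact p2_lt_ba α β hαβ)
        · by_cases hvu : v = u
          · rw [hvu]
            have : xM w u α β u = some β := by simp [xM, Ne.symm hsu]
            rw [this]
            exact plt_asymm _ hutop
          · have : xM w u α β v = none := by simp [xM, hvs, hvu]
            rw [this]
            have hPv := hext v hvs hvt hvu
            rw [hPv]
            intro hcon
            rcases hμv : μ v with _ | γ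
            · rw [hμv] at hcon; exact plt_irrefl _ _ hcon
            · rw [hμv] at hcon; exact plt_asymm _ (p0_unacc γ) hcon
    · -- μ w = μ t = some β ; challenger xM t u α β
      apply hpop.2 (xM w u α β) (xM_matching htu hαβ)
      apply beats21 P (xM w u α β) μ w u s htu
      · show (P w).lt (μ w) (xM w u α β w)
        rw [hwβ, hPt]
        have : xM w u α β w = some α := by simp [xM]
        rw [this]
        exact p2_lt_ba α β hαβ
      · show (P u).lt (μ u) (xM w u α β u)
        have : xM w u α β u = some β := by simp [xM, Ne.symm htu]
        rw [this]
        exact hutop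
      · intro v hvs
        show ¬ (P v).lt (xM w u α β v) (μ v)
        by_cases hvt : v = w
        · rw [hvt]
          have : xM w u α β w = some α := by simp [xM]
          rw [this, hwβ]
          exact plt_asymm _ (by rw [hPt]; exact p2_lt_ba α β hαβ)
        · by_cases hvu : v = u
          · rw [hvu]
            have : xM w u α β u = some β := by simp [xM, Ne.symm htu]
            rw [this]
            exact plt_asymm _ hutop
          · have : xM w u α β v = none := by simp [xM, hvt, hvu]
            rw [this]
            have hPv := hext v hvs hvt hvu
            rw [hPv]
            intro hcon
            rcases hμv : μ v with _ | γ
            · rw [hμv] at hcon; exact plt_irrefl _ _ hcon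
            · rw [hμv] at hcon; exact plt_asymm _ (p0_unacc γ) hcon

/-- key step: at the profile where s,t,u all report a>b>∅ (others: nothing acceptable),
strategy-proofness together with popularity forces agent u to receive a or b. -/
lemma key (ψ : Mechanism I O) (hpop : PopularMech ψ) (hsp : StrategyProof ψ)
    (s t u : I) (a b : O)
    (hst : s ≠ t) (hsu : s ≠ u) (htu : t ≠ u) (hab : a ≠ b)
    (G : I → LinearOrder (Option O))
    (hGs : G s = p2 a b) (hGt : G t = p2 a b) (hGu : G u = p2 a b)
    (hGext : ∀ v, v ≠ s → v ≠ t → v ≠ u → G v = p0) :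
    ψ G q1 u = some a ∨ ψ G q1 u = some b := by
  classical
  set Q := Function.update G u (p2 b a) with hQ
  have hQu : Q u = p2 b a := by rw [hQ, Function.update_self]
  have hQs : Q s = p2 a b := by rw [hQ, Function.update_of_ne hsu, hGs]
  have hQt : Q t = p2 a b := by rw [hQ, Function.update_of_ne htu, hGt]
  have hQext : ∀ v, v ≠ s → v ≠ t → v ≠ u → Q v = p0 := by
    intro v h1 h2 h3
    rw [hQ, Function.update_of_ne h3, hGext v h1 h2 h3]
  have hex : ∃ μ, Popular Q (q1 (O := O)) μ := by
    refine ⟨xM s u a b, xM_popular Q s u t a b hsu hst (Ne.symm htu) hab ?_ ?_ ?_ ?_⟩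
    · rw [hQs]; exact p2_top a b
    · rw [hQu]; exact p2_top b a
    · intro v h1 h2 h3
      rw [hQext v h1 h3 h2]
      exact p0_top
    · rw [hQt]; exact fun z hz => p2_acc a b hz
  have hQpop : Popular Q (q1 (O := O)) (ψ Q q1) := hpop Q q1 validCaps_q1 hex
  have hQub : ψ Q q1 u = some b :=
    charW Q s t u a b hst hsu htu hab hQs hQt hQu hQext hQpop
  have hspc := hsp G q1 validCaps_q1 u (p2 b a)
  rw [← hQ, hQub] at hspc
  by_contra hcon
  push_neg at hcon
  apply hspc
  show (G u).lt (ψ G q1 u) (some b)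
  rw [hGu]
  exact p2_second a b hab _ hcon.1 hcon.2

end Aux

/-- No mechanism is both popular and strategy-proof. -/
theorem stmt12 {I O : Type} [Fintype I] [Fintype O]
    (hI : 3 ≤ Fintype.card I) (hIO : Fintype.card I ≤ Fintype.card O) :
    ¬ ∃ ψ : Mechanism I O, IsMechanism ψ ∧ PopularMech ψ ∧ StrategyProof ψ := by
  rintro ⟨ψ, hmech, hpop, hsp⟩
  classical
  -- three distinct agents
  have c0 : (0 : ℕ) < Fintype.card I := by omega
  have c1 : (1 : ℕ) < Fintype.card I := by omega
  have c2 : (2 : ℕ) < Fintype.card I := by omega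
  set eI := Fintype.equivFin I with heI
  set i1 : I := eI.symm ⟨0, c0⟩ with hi1
  set i2 : I := eI.symm ⟨1, c1⟩ with hi2
  set i3 : I := eI.symm ⟨2, c2⟩ with hi3
  have h12 : i1 ≠ i2 := by
    intro h
    have := eI.symm.injective h
    rw [Fin.mk.injEq] at this
    omega
  have h13 : i1 ≠ i3 := by
    intro h
    have := eI.symm.injective h
    rw [Fin.mk.injEq] at this
    omega
  have h23 : i2 ≠ i3 := by
    intro h
    have := eI.symm.injective h
    rw [Fin.mk.injEq] at this
    omega
  -- two distinct objects
  have d0 : (0 : ℕ) < Fintype.card O := by omega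
  have d1 : (1 : ℕ) < Fintype.card O := by omega
  set eO := Fintype.equivFin O with heO
  set a : O := eO.symm ⟨0, d0⟩ with ha
  set b : O := eO.symm ⟨1, d1⟩ with hb
  have hab : a ≠ b := by
    intro h
    have := eO.symm.injective h
    rw [Fin.mk.injEq] at this
    omega
  -- the profile G: i1, i2, i3 all report a > b > ∅, everyone else nothing acceptable
  set G : I → LinearOrder (Option O) := fun v =>
    if v = i1 then p2 a b else if v = i2 then p2 a b else if v = i3 then p2 a b else p0
    with hG
  have hG1 : G i1 = p2 a b := by rw [hG]; simp
  have hG2 : G i2 = p2 a b := by rw [hG]; simp [Ne.symm h12]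
  have hG3 : G i3 = p2 a b := by rw [hG]; simp [Ne.symm h13, Ne.symm h23]
  have hGe : ∀ v, v ≠ i1 → v ≠ i2 → v ≠ i3 → G v = p0 := by
    intro v hv1 hv2 hv3
    rw [hG]
    simp [hv1, hv2, hv3]
  have k1 : ψ G q1 i1 = some a ∨ ψ G q1 i1 = some b := by
    refine key ψ hpop hsp i2 i3 i1 a b h23 (Ne.symm h12) (Ne.symm h13) hab G hG2 hG3 hG1 ?_
    intro v hv2 hv3 hv1
    exact hGe v hv1 hv2 hv3
  have k2 : ψ G q1 i2 = some a ∨ ψ G q1 i2 = some b := by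
    refine key ψ hpop hsp i1 i3 i2 a b h13 h12 (Ne.symm h23) hab G hG1 hG3 hG2 ?_
    intro v hv1 hv3 hv2
    exact hGe v hv1 hv2 hv3
  have k3 : ψ G q1 i3 = some a ∨ ψ G q1 i3 = some b := by
    refine key ψ hpop hsp i1 i2 i3 a b h12 h13 h23 hab G hG1 hG2 hG3 ?_
    intro v hv1 hv2 hv3
    exact hGe v hv1 hv2 hv3
  have hGm : IsMatching (q1 (O := O)) (ψ G q1) := hmech G q1 validCaps_q1
  rcases k1 with h1 | h1 <;> rcases k2 with h2 | h2 <;> rcases k3 with h3 | h3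
  · exact h12 (matching_inj hGm h1 h2)
  · exact h12 (matching_inj hGm h1 h2)
  · exact h13 (matching_inj hGm h1 h3)
  · exact h23 (matching_inj hGm h2 h3)
  · exact h23 (matching_inj hGm h2 h3)
  · exact h13 (matching_inj hGm h1 h3)
  · exact h12 (matching_inj hGm h1 h2)
  · exact h12 (matching_inj hGm h1 h2)
end
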